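/- Fix a lattice N (a finitely generated free abelian group), a genus g ∈ ℕ, a bound r ∈ ℕ, and degree data consisting of finitely many pairs (n_1,d_1),…,(n_s,d_s) with the n_k pairwise distinct primitive elements of N and the d_k positive integers. Then there are only finitely many combinatorial types of stable N_ℝ-parameterized tropical curves (Γ, h_Γ) of genus g and of the given degree that have fewer than r infinite vertices: there exists a finite list of pairs (finite graph with a partition of its vertices into finite and infinite ones, labelling of each edge by a subgroup of N) such that every such parameterized tropical curve has its combinatorial type isomorphic (as a labelled graph) to one in the list. -/

import Mathlib

open scoped TensorProduct

/-! # STATEMENT 0 (Lemma 2.6 of the paper)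

Finiteness of the combinatorial types of stable `N_ℝ`-parameterized tropical curves
of fixed genus and degree with a bounded number of infinite vertices.

Here `N` is a lattice (a finitely generated free abelian group), and
`N_ℝ := ℝ ⊗[ℤ] N`.  A parameterized tropical curve is modelled as a finite graph
(loops and parallel edges allowed, each edge oriented with finite source, and with
the infinite vertex of each unbounded edge as target), with a positive length on
every bounded edge, a map `h` on vertices into `N_ℝ`, and a lattice vector `ev e ∈ N`
for each edge: for an unbounded edge it is `h` of its infinite vertex, and for a
bounded edge `e` from `v` to `v'` it is `(1/|e|)·(h v' - h v)`.  Infinite vertices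
have valency 1 and the balancing condition holds at every finite vertex.  Note that
`ev e` is exactly `l(e)·n_e` (multiplicity times distinguished generator of the
slope), so the label `l(e)·N_e ⊆ N` of the combinatorial type is the subgroup
`ℤ·(ev e) = AddSubgroup.zmultiples (ev e)`. -/

/-- The canonical embedding `N → ℝ ⊗[ℤ] N = N_ℝ`, `n ↦ 1 ⊗ n`. -/
noncomputable def latticeEmb (N : Type*) [AddCommGroup N] : N →+ (ℝ ⊗[ℤ] N) where
  toFun n := (1 : ℝ) ⊗ₜ[ℤ] n
  map_zero' := TensorProduct.tmul_zero _ _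
  map_add' x y := TensorProduct.tmul_add _ x y

/-- An element of a lattice is primitive if it is nonzero and is not a nontrivial
integer multiple of another lattice element. -/
def IsPrimitiveVec {N : Type*} [AddCommGroup N] (n : N) : Prop :=
  n ≠ 0 ∧ ∀ (c : ℤ) (m : N), c • m = n → IsUnit c

/-- An `N_ℝ`-parameterized tropical curve (with the combinatorially irrelevant data
of the total order on the infinite vertices omitted).  Vertices `v` with `inf v` are
the infinite ones; every edge has a finite source, an edge is unbounded iff its
target is infinite, `len` records the (positive) lengths of the bounded edges, `h`
is the parameterization map on vertices and `ev` the associated lattice vectors of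
the edges, as explained above. -/
structure ParamTropCurve (N : Type*) [AddCommGroup N] : Type _ where
  /-- the vertices -/
  V : Type
  /-- the edges -/
  E : Type
  fintypeV : Fintype V
  fintypeE : Fintype E
  /-- the source of an edge (always a finite vertex) -/
  src : E → V
  /-- the target of an edge; unbounded edges are those whose target is infinite -/
  tgt : E → V
  /-- the predicate singling out the infinite vertices -/
  inf : V → Prop
  /-- the length of a (bounded) edge -/
  len : E → ℝ
  /-- the parameterization map on vertices -/
  h : V → ℝ ⊗[ℤ] N
  /-- the lattice vector of an edge: `l(e)·n_e`, oriented from source to target -/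
  ev : E → N
  src_finite : ∀ e, ¬ inf (src e)
  /-- every infinite vertex has valency one (it is hit by exactly one edge, and by
  `src_finite` it is the source of none); the unique edge at it is unbounded and
  connects it to a finite vertex (its source). -/
  inf_valency : ∀ v, inf v → Nat.card {e : E // tgt e = v} = 1
  /-- `h` takes infinite vertices into `N ⊆ N_ℝ`, and the vector of an unbounded
  edge is `h` of its infinite vertex -/
  ev_unbounded : ∀ e, inf (tgt e) → latticeEmb N (ev e) = h (tgt e)
  /-- the vector of a bounded edge `e` is `(1/|e|)·(h (tgt e) - h (src e))`, and it
  lies in `N ⊆ N_ℝ` -/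
  ev_bounded : ∀ e, ¬ inf (tgt e) → len e • latticeEmb N (ev e) = h (tgt e) - h (src e)
  /-- bounded edges have positive length -/
  len_pos : ∀ e, ¬ inf (tgt e) → 0 < len e
  /-- the balancing condition at every finite vertex -/
  balanced : ∀ v, ¬ inf v →
    (∑ᶠ e ∈ {e : E | src e = v}, latticeEmb N (ev e)) =
      ∑ᶠ e ∈ {e : E | ¬ inf (tgt e) ∧ tgt e = v}, latticeEmb N (ev e)

attribute [instance] ParamTropCurve.fintypeV ParamTropCurve.fintypeE

namespace ParamTropCurve

variable {N : Type*} [AddCommGroup N]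

/-- A parameterized tropical curve is stable if every finite vertex has valency at
least 3 (a loop at a vertex counting twice). -/
def Stable (Γ : ParamTropCurve N) : Prop :=
  ∀ v, ¬ Γ.inf v →
    3 ≤ Nat.card {e : Γ.E // Γ.src e = v} + Nat.card {e : Γ.E // Γ.tgt e = v}

/-- The genus of a tropical curve is `1 - |V(Γ)| + |E(Γ)|`. -/
def HasGenus (Γ : ParamTropCurve N) (g : ℕ) : Prop :=
  Fintype.card Γ.E + 1 = Fintype.card Γ.V + g

/-- `Γ` has degree `{(n i, dd i)}_{i : ι}`: the nonzero vector of every unbounded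
edge is a positive multiple of some `n i` (so the `n i` are exactly the distinguished
generators of the slopes of the unbounded edges, the `n i` being primitive and the
`dd i` positive), and for each `i` the multiplicities `l(e)` of the unbounded edges
`e` with `n_e = n i` add up to `dd i`; since `ev e = l(e) • n i` for those edges,
this is expressed by summing the vectors `ev e` themselves. -/
def HasDegree (Γ : ParamTropCurve N) {ι : Type*} (n : ι → N) (dd : ι → ℕ) : Prop :=
  (∀ e, Γ.inf (Γ.tgt e) →
      Γ.ev e = 0 ∨ ∃ (i : ι) (c : ℕ), 0 < c ∧ Γ.ev e = (c : ℤ) • n i) ∧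
  ∀ i : ι, (dd i : ℤ) • n i =
    ∑ᶠ e ∈ {e : Γ.E | Γ.inf (Γ.tgt e) ∧ ∃ c : ℕ, 0 < c ∧ Γ.ev e = (c : ℤ) • n i},
      Γ.ev e

end ParamTropCurve

/-- A finite graph (with vertices partitioned into finite and infinite ones, edges
oriented) whose edges are labelled by subgroups of the lattice `N`: the data
recording the combinatorial type of a parameterized tropical curve. -/
structure LabeledGraph (N : Type*) [AddCommGroup N] : Type _ where
  /-- the vertices -/
  V : Type
  /-- the edges -/
  E : Type
  fintypeV : Fintype V
  fintypeE : Fintype E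
  /-- the source of an edge -/
  src : E → V
  /-- the target of an edge -/
  tgt : E → V
  /-- the predicate singling out the infinite vertices -/
  inf : V → Prop
  /-- the label of an edge: a subgroup of `N` -/
  lab : E → AddSubgroup N

attribute [instance] LabeledGraph.fintypeV LabeledGraph.fintypeE

/-- An isomorphism of labelled graphs: bijections on vertices and edges respecting
the partition into finite and infinite vertices, the labels, and the incidences
(edges being unoriented, an edge may be matched with either orientation). -/
def LabeledGraph.Iso {N : Type*} [AddCommGroup N] (G G' : LabeledGraph N) : Prop :=
  ∃ (φ : G.V ≃ G'.V) (ψ : G.E ≃ G'.E),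
    (∀ v, G'.inf (φ v) ↔ G.inf v) ∧
    (∀ e, G'.lab (ψ e) = G.lab e) ∧
    (∀ e, (G'.src (ψ e) = φ (G.src e) ∧ G'.tgt (ψ e) = φ (G.tgt e)) ∨
          (G'.src (ψ e) = φ (G.tgt e) ∧ G'.tgt (ψ e) = φ (G.src e)))

/-- The combinatorial type of a parameterized tropical curve: its underlying graph,
with each edge `e` labelled by the subgroup `l(e)·N_e = ℤ·(ev e)` of `N`. -/
def ParamTropCurve.ctype {N : Type*} [AddCommGroup N] (Γ : ParamTropCurve N) :
    LabeledGraph N where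
  V := Γ.V
  E := Γ.E
  fintypeV := Γ.fintypeV
  fintypeE := Γ.fintypeE
  src := Γ.src
  tgt := Γ.tgt
  inf := Γ.inf
  lab e := AddSubgroup.zmultiples (Γ.ev e)

section AuxFiniteness

open Finset

variable {N : Type} [AddCommGroup N]

/-- Convert a finsum over a set of elements of a fintype to a finset sum. -/
lemma finsum_mem_setOf_eq_sum {α M : Type*} [Fintype α] [AddCommMonoid M]
    (P : α → Prop) [DecidablePred P] (f : α → M) :
    ∑ᶠ x ∈ {x | P x}, f x = ∑ x ∈ Finset.univ.filter P, f x := by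
  rw [← finsum_mem_coe_finset]
  congr 1
  ext x; simp

/-- The real-linear functional on `ℝ ⊗[ℤ] N` induced by an integral functional. -/
noncomputable def PhiOf (ξ : N →ₗ[ℤ] ℤ) : (ℝ ⊗[ℤ] N) →ₗ[ℝ] ℝ :=
  LinearMap.liftBaseChange ℝ
    { toFun := fun m => ((ξ m : ℤ) : ℝ)
      map_add' := fun x y => by push_cast [map_add]; ring
      map_smul' := fun c x => by push_cast [map_smul]; simp }

lemma PhiOf_emb (ξ : N →ₗ[ℤ] ℤ) (m : N) : PhiOf ξ (latticeEmb N m) = ((ξ m : ℤ) : ℝ) := by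
  show PhiOf ξ ((1 : ℝ) ⊗ₜ[ℤ] m) = _
  rw [PhiOf, LinearMap.liftBaseChange_tmul]
  simp

variable [Module.Free ℤ N] [Module.Finite ℤ N]
variable {ι : Type} [Fintype ι] {n : ι → N} {dd : ι → ℕ}

namespace ParamTropCurve

variable (Γ : ParamTropCurve N)

open Classical in
/-- The sum of the absolute values of `ξ (ev e)` over any set of unbounded edges is
bounded by `∑ i, dd i * |ξ (n i)|`. -/
lemma unbounded_sum_bound (hdeg : Γ.HasDegree n dd) (hn0 : ∀ i, n i ≠ 0)
    (ξ : N →ₗ[ℤ] ℤ) (W : Finset Γ.E) (hW : ∀ e ∈ W, Γ.inf (Γ.tgt e)) :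
    ∑ e ∈ W, |((ξ (Γ.ev e) : ℤ) : ℝ)| ≤ ∑ i, (dd i : ℝ) * |((ξ (n i) : ℤ) : ℝ)| := by
  classical
  set q : Γ.E → ℝ := fun e => |((ξ (Γ.ev e) : ℤ) : ℝ)| with hq
  -- the class of an edge
  set pick : Γ.E → Option ι := fun e =>
    if h : ∃ i, ∃ c : ℕ, 0 < c ∧ Γ.ev e = (c : ℤ) • n i then some h.choose else none with hpick
  have hpick_none : ∀ e, pick e = none →
      ¬ ∃ i, ∃ c : ℕ, 0 < c ∧ Γ.ev e = (c : ℤ) • n i := by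
    intro e hp hx
    simp only [hpick, dif_pos hx] at hp
    exact absurd hp (by simp)
  have hpick_some : ∀ e i, pick e = some i → ∃ c : ℕ, 0 < c ∧ Γ.ev e = (c : ℤ) • n i := by
    intro e i hp
    by_cases hx : ∃ j, ∃ c : ℕ, 0 < c ∧ Γ.ev e = (c : ℤ) • n j
    · simp only [hpick, dif_pos hx, Option.some_inj] at hp
      exact hp ▸ hx.choose_spec
    · simp only [hpick, dif_neg hx] at hp
      exact absurd hp (by simp)
  -- per-class data: the chosen multiplicities
  set cf : ι → Γ.E → ℕ := fun i e =>
    if h : ∃ c : ℕ, 0 < c ∧ Γ.ev e = (c : ℤ) • n i then h.choose else 0 with hcf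
  set U : ι → Finset Γ.E := fun i =>
    Finset.univ.filter (fun e => Γ.inf (Γ.tgt e) ∧ ∃ c : ℕ, 0 < c ∧ Γ.ev e = (c : ℤ) • n i)
    with hU
  have hUev : ∀ i, ∀ e ∈ U i, Γ.ev e = (cf i e : ℤ) • n i := by
    intro i e he
    simp only [hU, Finset.mem_filter] at he
    obtain ⟨-, -, hc⟩ := he
    simp only [hcf, dif_pos hc]
    exact hc.choose_spec.2
  have hUsum : ∀ i, ∑ e ∈ U i, cf i e = dd i := by
    intro i
    have hd := hdeg.2 i
    rw [finsum_mem_setOf_eq_sum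
      (fun e => Γ.inf (Γ.tgt e) ∧ ∃ c : ℕ, 0 < c ∧ Γ.ev e = (c : ℤ) • n i) Γ.ev] at hd
    have : ((dd i : ℤ)) • n i = ((∑ e ∈ U i, cf i e : ℕ) : ℤ) • n i := by
      rw [hd]
      push_cast
      rw [Finset.sum_smul]
      exact Finset.sum_congr rfl (fun e he => hUev i e he)
    have h2 := smul_left_injective ℤ (hn0 i) this
    exact_mod_cast h2.symm
  -- split the sum over the fibers of `pick`
  rw [← Finset.sum_fiberwise W pick q, Fintype.sum_option]
  have hnone : ∑ e ∈ W.filter (fun e => pick e = none), q e = 0 := by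
    apply Finset.sum_eq_zero
    intro e he
    obtain ⟨heW, hep⟩ := Finset.mem_filter.1 he
    rcases hdeg.1 e (hW e heW) with h0 | ⟨i, c, hc, hev⟩
    · simp [hq, h0]
    · exact absurd ⟨i, c, hc, hev⟩ (hpick_none e hep)
  rw [hnone, zero_add]
  apply Finset.sum_le_sum
  intro i _
  have hsub : W.filter (fun e => pick e = some i) ⊆ U i := by
    intro e he
    obtain ⟨heW, hep⟩ := Finset.mem_filter.1 he
    simp only [hU, Finset.mem_filter]
    exact ⟨Finset.mem_univ _, hW e heW, hpick_some e i hep⟩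
  calc ∑ e ∈ W.filter (fun e => pick e = some i), q e
      ≤ ∑ e ∈ U i, q e := Finset.sum_le_sum_of_subset_of_nonneg hsub
        (fun e _ _ => abs_nonneg _)
    _ = ∑ e ∈ U i, (cf i e : ℝ) * |((ξ (n i) : ℤ) : ℝ)| := by
        apply Finset.sum_congr rfl
        intro e he
        simp only [hq]
        rw [hUev i e he, map_zsmul, smul_eq_mul]
        push_cast
        rw [abs_mul, Nat.abs_cast]
    _ = (dd i : ℝ) * |((ξ (n i) : ℤ) : ℝ)| := by
        rw [← Finset.sum_mul]
        congr 1
        exact_mod_cast congrArg (Nat.cast (R := ℝ)) (hUsum i)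

/-- One-sided bound on `ξ (ev e)` for a bounded edge, via the level-set argument. -/
lemma ev_bounded_le (hdeg : Γ.HasDegree n dd) (hn0 : ∀ i, n i ≠ 0)
    (ξ : N →ₗ[ℤ] ℤ) (e0 : Γ.E) (he0 : ¬ Γ.inf (Γ.tgt e0)) :
    ((ξ (Γ.ev e0) : ℤ) : ℝ) ≤ ∑ i, (dd i : ℝ) * |((ξ (n i) : ℤ) : ℝ)| := by
  classical
  set D : ℝ := ∑ i, (dd i : ℝ) * |((ξ (n i) : ℤ) : ℝ)| with hD
  have hD0 : 0 ≤ D := Finset.sum_nonneg (fun i _ => by positivity)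
  set q : Γ.E → ℝ := fun e => ((ξ (Γ.ev e) : ℤ) : ℝ) with hq
  rcases le_or_gt (q e0) 0 with h | hpos
  · exact le_trans h hD0
  set Φ := PhiOf ξ with hΦ
  -- length relation for bounded edges
  have hlen : ∀ e, ¬ Γ.inf (Γ.tgt e) →
      Φ (Γ.h (Γ.tgt e)) - Φ (Γ.h (Γ.src e)) = Γ.len e * q e := by
    intro e he
    have h1 := congrArg Φ (Γ.ev_bounded e he)
    rw [map_sub, map_smul] at h1
    rw [← h1, hΦ, PhiOf_emb]
    simp [hq, smul_eq_mul]
  -- the balancing condition, as finset sums of real numbers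
  have bal : ∀ v, ¬ Γ.inf v →
      ∑ e ∈ Finset.univ.filter (fun e => Γ.src e = v), q e =
      ∑ e ∈ Finset.univ.filter (fun e => ¬ Γ.inf (Γ.tgt e) ∧ Γ.tgt e = v), q e := by
    intro v hv
    have hb := Γ.balanced v hv
    rw [finsum_mem_setOf_eq_sum (fun e => Γ.src e = v) (fun e => latticeEmb N (Γ.ev e)),
      finsum_mem_setOf_eq_sum (fun e => ¬ Γ.inf (Γ.tgt e) ∧ Γ.tgt e = v)
        (fun e => latticeEmb N (Γ.ev e))] at hb
    have := congrArg Φ hb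
    rw [map_sum, map_sum] at this
    simpa only [hΦ, PhiOf_emb, hq] using this
  set t : ℝ := Φ (Γ.h (Γ.src e0)) with ht
  set T : Finset Γ.V := Finset.univ.filter (fun v => ¬ Γ.inf v ∧ Φ (Γ.h v) ≤ t) with hT
  have hsrcT : Γ.src e0 ∈ T := by
    simp only [hT, Finset.mem_filter]
    exact ⟨Finset.mem_univ _, Γ.src_finite e0, le_refl _⟩
  have htgtT : Γ.tgt e0 ∉ T := by
    simp only [hT, Finset.mem_filter, Finset.mem_univ, true_and, not_and, not_le]
    intro _
    have := hlen e0 he0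
    nlinarith [Γ.len_pos e0 he0]
  -- summing balancing over T
  have key : ∑ e ∈ Finset.univ.filter (fun e => Γ.src e ∈ T), q e =
      ∑ e ∈ Finset.univ.filter (fun e => Γ.tgt e ∈ T), q e := by
    rw [← Finset.sum_fiberwise_eq_sum_filter Finset.univ T Γ.src q,
      ← Finset.sum_fiberwise_eq_sum_filter Finset.univ T Γ.tgt q]
    apply Finset.sum_congr rfl
    intro v hv
    have hvfin : ¬ Γ.inf v := (Finset.mem_filter.1 hv).2.1
    have hfe : Finset.univ.filter (fun e => ¬ Γ.inf (Γ.tgt e) ∧ Γ.tgt e = v) =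
        Finset.univ.filter (fun e => Γ.tgt e = v) := by
      ext e
      simp only [Finset.mem_filter, Finset.mem_univ, true_and]
      exact ⟨fun h => h.2, fun h => ⟨h ▸ hvfin, h⟩⟩
    rw [bal v hvfin, hfe]
  -- split into crossing edges
  set X : Finset Γ.E := Finset.univ.filter (fun e => Γ.src e ∈ T ∧ Γ.tgt e ∉ T) with hX
  set Y : Finset Γ.E := Finset.univ.filter (fun e => Γ.tgt e ∈ T ∧ Γ.src e ∉ T) with hY
  have hXY : ∑ e ∈ X, q e = ∑ e ∈ Y, q e := by
    have e1 : ∑ e ∈ Finset.univ.filter (fun e => Γ.src e ∈ T), q e =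
        (∑ e ∈ Finset.univ.filter (fun e => Γ.src e ∈ T ∧ Γ.tgt e ∈ T), q e) +
        ∑ e ∈ X, q e := by
      rw [← Finset.sum_filter_add_sum_filter_not
        (Finset.univ.filter (fun e => Γ.src e ∈ T)) (fun e => Γ.tgt e ∈ T) q,
        Finset.filter_filter, Finset.filter_filter]
    have e2 : ∑ e ∈ Finset.univ.filter (fun e => Γ.tgt e ∈ T), q e =
        (∑ e ∈ Finset.univ.filter (fun e => Γ.src e ∈ T ∧ Γ.tgt e ∈ T), q e) +
        ∑ e ∈ Y, q e := by
      rw [← Finset.sum_filter_add_sum_filter_not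
        (Finset.univ.filter (fun e => Γ.tgt e ∈ T)) (fun e => Γ.src e ∈ T) q,
        Finset.filter_filter, Finset.filter_filter]
      congr 2
      ext e
      simp only [Finset.mem_filter, Finset.mem_univ, true_and]
      exact and_comm
    rw [e1, e2] at key
    linarith
  -- Y-edges have nonpositive contribution
  have hYnonpos : ∑ e ∈ Y, q e ≤ 0 := by
    apply Finset.sum_nonpos
    intro e he
    simp only [hY, Finset.mem_filter, Finset.mem_univ, true_and] at he
    obtain ⟨hetgt, hesrc⟩ := he
    simp only [hT, Finset.mem_filter, Finset.mem_univ, true_and] at hetgt hesrc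
    have h1 : t < Φ (Γ.h (Γ.src e)) := by
      by_contra h
      exact hesrc ⟨Γ.src_finite e, not_lt.1 h⟩
    have h2 := hlen e hetgt.1
    nlinarith [Γ.len_pos e hetgt.1]
  -- split X into bounded and unbounded crossing edges
  have hXsplit : (∑ e ∈ X.filter (fun e => Γ.inf (Γ.tgt e)), q e) +
      ∑ e ∈ X.filter (fun e => ¬ Γ.inf (Γ.tgt e)), q e = ∑ e ∈ X, q e :=
    Finset.sum_filter_add_sum_filter_not X (fun e => Γ.inf (Γ.tgt e)) q
  -- bounded crossing edges have nonnegative contribution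
  have hXb_nonneg : ∀ e ∈ X.filter (fun e => ¬ Γ.inf (Γ.tgt e)), 0 ≤ q e := by
    intro e he
    simp only [Finset.mem_filter] at he
    obtain ⟨heX, hefin⟩ := he
    simp only [hX, Finset.mem_filter, Finset.mem_univ, true_and] at heX
    obtain ⟨hesrc, hetgt⟩ := heX
    simp only [hT, Finset.mem_filter, Finset.mem_univ, true_and] at hesrc hetgt
    have h1 : t < Φ (Γ.h (Γ.tgt e)) := by
      by_contra h
      exact hetgt ⟨hefin, not_lt.1 h⟩
    have h2 := hlen e hefin
    nlinarith [Γ.len_pos e hefin, hesrc.2]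
  have he0X : e0 ∈ X.filter (fun e => ¬ Γ.inf (Γ.tgt e)) := by
    simp only [Finset.mem_filter, hX, Finset.mem_univ, true_and]
    exact ⟨⟨hsrcT, htgtT⟩, he0⟩
  have h3 : q e0 ≤ ∑ e ∈ X.filter (fun e => ¬ Γ.inf (Γ.tgt e)), q e :=
    Finset.single_le_sum hXb_nonneg he0X
  -- the unbounded crossing edges are controlled by the degree
  have h4 : ∑ e ∈ X.filter (fun e => Γ.inf (Γ.tgt e)), (-q e) ≤ D := by
    calc ∑ e ∈ X.filter (fun e => Γ.inf (Γ.tgt e)), (-q e)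
        ≤ ∑ e ∈ X.filter (fun e => Γ.inf (Γ.tgt e)), |q e| :=
          Finset.sum_le_sum (fun e _ => neg_le_abs _)
      _ ≤ D := Γ.unbounded_sum_bound hdeg hn0 ξ _
          (fun e he => (Finset.mem_filter.1 he).2)
  have h5 : ∑ e ∈ X.filter (fun e => Γ.inf (Γ.tgt e)), (-q e) =
      -∑ e ∈ X.filter (fun e => Γ.inf (Γ.tgt e)), q e := by
    rw [Finset.sum_neg_distrib]
  linarith

/-- Two-sided bound on `ξ (ev e)` for every edge. -/
lemma ev_abs_bound (hdeg : Γ.HasDegree n dd) (hn0 : ∀ i, n i ≠ 0)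
    (ξ : N →ₗ[ℤ] ℤ) (e0 : Γ.E) :
    |((ξ (Γ.ev e0) : ℤ) : ℝ)| ≤ ∑ i, (dd i : ℝ) * |((ξ (n i) : ℤ) : ℝ)| := by
  by_cases he0 : Γ.inf (Γ.tgt e0)
  · have := Γ.unbounded_sum_bound hdeg hn0 ξ {e0} (by simpa using he0)
    simpa using this
  · have h1 := Γ.ev_bounded_le hdeg hn0 ξ e0 he0
    have h2 := Γ.ev_bounded_le hdeg hn0 (-ξ) e0 he0
    simp only [LinearMap.neg_apply, Int.cast_neg, abs_neg] at h2
    rw [abs_le]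
    constructor <;> linarith

/-- Bounds on the number of vertices and edges of a stable curve of genus `g` with
fewer than `r` infinite vertices. -/
lemma card_bounds (Γ : ParamTropCurve N) {g r : ℕ} (hst : Γ.Stable) (hg : Γ.HasGenus g)
    (hr : Nat.card {v : Γ.V // Γ.inf v} < r) :
    Fintype.card Γ.V ≤ 2 * r + 2 * g ∧ Fintype.card Γ.E ≤ 2 * r + 3 * g := by
  classical
  set vi := (Finset.univ.filter (fun v => Γ.inf v)).card with hvi
  set vf := (Finset.univ.filter (fun v => ¬ Γ.inf v)).card with hvf
  have hV : vi + vf = Fintype.card Γ.V := by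
    rw [hvi, hvf]
    exact Finset.card_filter_add_card_filter_not _
  have hvir : vi < r := by
    have : Nat.card {v : Γ.V // Γ.inf v} = vi := by
      rw [Nat.card_eq_fintype_card, Fintype.card_subtype]
    omega
  -- counting unbounded edges
  have hEu : (Finset.univ.filter (fun e => Γ.inf (Γ.tgt e))).card = vi := by
    rw [Finset.card_eq_sum_card_fiberwise (f := Γ.tgt)
      (t := Finset.univ.filter (fun v => Γ.inf v))
      (fun e he => by
        simp only [Finset.mem_coe, Finset.mem_filter, Finset.mem_univ, true_and] at he ⊢
        exact he)]
    rw [hvi, Finset.card_eq_sum_ones]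
    apply Finset.sum_congr rfl
    intro v hv
    simp only [Finset.mem_filter, Finset.mem_univ, true_and] at hv
    have h1 : (Finset.univ.filter (fun e => Γ.inf (Γ.tgt e))).filter (fun e => Γ.tgt e = v) =
        Finset.univ.filter (fun e => Γ.tgt e = v) := by
      ext e
      simp only [Finset.mem_filter, Finset.mem_univ, true_and]
      exact ⟨fun h => h.2, fun h => ⟨h ▸ hv, h⟩⟩
    rw [h1]
    have h2 := Γ.inf_valency v hv
    rw [Nat.card_eq_fintype_card, Fintype.card_subtype] at h2
    exact h2
  have hEsrc : Fintype.card Γ.E = ∑ v ∈ Finset.univ.filter (fun v => ¬ Γ.inf v),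
      (Finset.univ.filter (fun e => Γ.src e = v)).card := by
    rw [← Finset.card_univ, Finset.card_eq_sum_card_fiberwise (f := Γ.src)
      (t := Finset.univ.filter (fun v => ¬ Γ.inf v))
      (fun e _ => by
        simp only [Finset.mem_coe, Finset.mem_filter, Finset.mem_univ, true_and]
        exact Γ.src_finite e)]
  set eb := (Finset.univ.filter (fun e => ¬ Γ.inf (Γ.tgt e))).card with heb
  have hEb : eb = ∑ v ∈ Finset.univ.filter (fun v => ¬ Γ.inf v),
      (Finset.univ.filter (fun e => Γ.tgt e = v)).card := by
    rw [heb, Finset.card_eq_sum_card_fiberwise (f := Γ.tgt)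
      (t := Finset.univ.filter (fun v => ¬ Γ.inf v))
      (fun e he => by
        simp only [Finset.mem_coe, Finset.mem_filter, Finset.mem_univ, true_and] at he ⊢
        exact he)]
    apply Finset.sum_congr rfl
    intro v hv
    simp only [Finset.mem_filter, Finset.mem_univ, true_and] at hv
    congr 1
    ext e
    simp only [Finset.mem_filter, Finset.mem_univ, true_and]
    exact ⟨fun h => h.2, fun h => ⟨h ▸ hv, h⟩⟩
  have hEsplit : vi + eb = Fintype.card Γ.E := by
    rw [← hEu, heb, ← Finset.card_univ]
    exact Finset.card_filter_add_card_filter_not _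
  have hstab : 3 * vf ≤ Fintype.card Γ.E + eb := by
    have h1 : ∀ v ∈ Finset.univ.filter (fun v => ¬ Γ.inf v),
        3 ≤ (Finset.univ.filter (fun e => Γ.src e = v)).card +
          (Finset.univ.filter (fun e => Γ.tgt e = v)).card := by
      intro v hv
      simp only [Finset.mem_filter, Finset.mem_univ, true_and] at hv
      have := hst v hv
      rwa [Nat.card_eq_fintype_card, Nat.card_eq_fintype_card,
        Fintype.card_subtype, Fintype.card_subtype] at this
    have h2 := Finset.card_nsmul_le_sum (Finset.univ.filter (fun v => ¬ Γ.inf v))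
      _ 3 h1
    rw [Finset.sum_add_distrib] at h2
    rw [← hEsrc, ← hEb] at h2
    simpa [smul_eq_mul, mul_comm] using h2
  have hgen : Fintype.card Γ.E + 1 = Fintype.card Γ.V + g := hg
  omega

end ParamTropCurve

open Module in
/-- A coordinate box in a lattice is finite. -/
lemma ev_box_finite (N : Type) [AddCommGroup N] [Module.Free ℤ N] [Module.Finite ℤ N]
    (D : Free.ChooseBasisIndex ℤ N → ℕ) :
    {m : N | ∀ k, ((Free.chooseBasis ℤ N).repr m k).natAbs ≤ D k}.Finite := by
  classical
  set b := Free.chooseBasis ℤ N with hb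
  have hset : {m : N | ∀ k, (b.repr m k).natAbs ≤ D k} =
      (fun m : N => fun k => b.repr m k) ⁻¹'
        (Set.pi Set.univ (fun k => {z : ℤ | z.natAbs ≤ D k})) := by
    ext m
    simp [Set.mem_pi]
  rw [hset]
  apply Set.Finite.preimage
  · intro x _ y _ h
    apply b.repr.injective
    exact Finsupp.ext (fun k => congrFun h k)
  · apply Set.Finite.pi
    intro k
    apply (Set.finite_Icc (-(D k) : ℤ) (D k)).subset
    intro z hz
    simp only [Set.mem_setOf_eq] at hz
    rw [Set.mem_Icc]
    omega

end AuxFiniteness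

/-- Lemma 2.6: Fix a lattice `N`, a genus `g`, a bound `r` and degree
data `(n i, dd i)` with the `n i` pairwise distinct primitive vectors of `N` and the
`dd i` positive integers.  Then there are only finitely many combinatorial types of
stable `N_ℝ`-parameterized tropical curves of genus `g` and of the given degree
having fewer than `r` infinite vertices: there is a finite list of edge-labelled
graphs containing, up to isomorphism of labelled graphs, the combinatorial type of
every such curve. -/
theorem stmt_0 (N : Type) [AddCommGroup N] [Module.Free ℤ N] [Module.Finite ℤ N]
    (g r : ℕ) {ι : Type} [Fintype ι] (n : ι → N) (dd : ι → ℕ)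
    (hinj : Function.Injective n) (hprim : ∀ i, IsPrimitiveVec (n i))
    (hdd : ∀ i, 0 < dd i) :
    ∃ L : List (LabeledGraph N), ∀ Γ : ParamTropCurve N,
      Γ.Stable → Γ.HasGenus g → Γ.HasDegree n dd →
      Nat.card {v : Γ.V // Γ.inf v} < r →
      ∃ G ∈ L, Γ.ctype.Iso G := by
  classical
  set κ := Module.Free.ChooseBasisIndex ℤ N with hκ
  set bN := Module.Free.chooseBasis ℤ N with hbN
  set D : κ → ℕ := fun k => ∑ i, dd i * (bN.repr (n i) k).natAbs with hD
  have hSBfin : {m : N | ∀ k, (bN.repr m k).natAbs ≤ D k}.Finite := ev_box_finite N D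
  set F : Finset N := hSBfin.toFinset with hF
  set BV := 2 * r + 2 * g with hBV
  set BE := 2 * r + 3 * g with hBE
  -- the packaging type of all possible combinatorial types within the bounds
  let P := Σ (a : Fin (BV + 1)) (b : Fin (BE + 1)),
    (Fin b.val → Fin a.val) × (Fin b.val → Fin a.val) × Finset (Fin a.val) ×
    (Fin b.val → {x : N // x ∈ F})
  let builder : P → LabeledGraph N := fun p =>
    { V := Fin p.1.val
      E := Fin p.2.1.val
      fintypeV := inferInstance
      fintypeE := inferInstance
      src := p.2.2.1
      tgt := p.2.2.2.1
      inf := fun v => v ∈ p.2.2.2.2.1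
      lab := fun e => AddSubgroup.zmultiples (p.2.2.2.2.2 e : N) }
  refine ⟨(Set.finite_range builder).toFinset.toList, ?_⟩
  intro Γ hst hg hdeg hr
  have hn0 : ∀ i, n i ≠ 0 := fun i => (hprim i).1
  -- every edge vector lies in the box
  have hev : ∀ e, Γ.ev e ∈ F := by
    intro e
    rw [hF, Set.Finite.mem_toFinset]
    intro k
    have h1 := Γ.ev_abs_bound (n := n) (dd := dd) hdeg hn0 (bN.coord k) e
    have h2 : (((bN.repr (Γ.ev e) k).natAbs : ℕ) : ℝ) ≤ ((D k : ℕ) : ℝ) := by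
      rw [Nat.cast_natAbs, Int.cast_abs]
      calc |((bN.repr (Γ.ev e) k : ℤ) : ℝ)|
          = |((bN.coord k (Γ.ev e) : ℤ) : ℝ)| := by rw [Module.Basis.coord_apply]
        _ ≤ ∑ i, (dd i : ℝ) * |((bN.coord k (n i) : ℤ) : ℝ)| := h1
        _ = ((D k : ℕ) : ℝ) := by
            rw [hD]
            push_cast [Nat.cast_natAbs, Int.cast_abs, Module.Basis.coord_apply]
            rfl
    exact_mod_cast h2
  obtain ⟨hcV, hcE⟩ := Γ.card_bounds hst hg hr
  set a := Fintype.card Γ.V with ha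
  set b := Fintype.card Γ.E with hbb
  let eV : Γ.V ≃ Fin a := Fintype.equivFin Γ.V
  let eE : Γ.E ≃ Fin b := Fintype.equivFin Γ.E
  let p : P := ⟨⟨a, by omega⟩, ⟨b, by omega⟩,
    fun x => eV (Γ.src (eE.symm x)), fun x => eV (Γ.tgt (eE.symm x)),
    Finset.univ.filter (fun x => Γ.inf (eV.symm x)),
    fun x => ⟨Γ.ev (eE.symm x), hev _⟩⟩
  refine ⟨builder p, ?_, ?_⟩
  · rw [Finset.mem_toList, Set.Finite.mem_toFinset]
    exact ⟨p, rfl⟩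
  · refine ⟨eV, eE, ?_, ?_, ?_⟩
    · intro v
      show (eV v ∈ Finset.univ.filter (fun x => Γ.inf (eV.symm x))) ↔ Γ.inf v
      simp only [Finset.mem_filter, Finset.mem_univ, true_and]; exact Iff.of_eq (congrArg Γ.inf (eV.symm_apply_apply v))
    · intro e
      show AddSubgroup.zmultiples (Γ.ev (eE.symm (eE e))) = AddSubgroup.zmultiples (Γ.ev e)
      exact congrArg (fun x => AddSubgroup.zmultiples (Γ.ev x)) (eE.symm_apply_apply e)
    · intro e
      left
      constructor
      · show eV (Γ.src (eE.symm (eE e))) = eV (Γ.src e)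
        exact congrArg (fun x => eV (Γ.src x)) (eE.symm_apply_apply e)
      · show eV (Γ.tgt (eE.symm (eE e))) = eV (Γ.tgt e)
        exact congrArg (fun x => eV (Γ.tgt x)) (eE.symm_apply_apply e)
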